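/- Let V be a finite set with at least two elements, and let E be the quadratic form on ℝ^V associated to a symmetric bilinear form. Then the following are equivalent: (a) E(u) ≥ 0 for all u, E(u) = 0 if and only if u is constant, and E satisfies the Markov property E(min(max(u,0),1)) ≤ E(u) for all u : V → ℝ; (b) there exists a symmetric function c : V × V → [0,∞) such that for any distinct x, y ∈ V there exist m ≥ 0 and points x = x_0, x_1, ..., x_m = y in V with c(x_i, x_{i+1}) > 0 for all i < m, and E(u) = (1/2) * ∑_{x,y ∈ V} c(x,y)*(u(x) - u(y))^2 for all u : V → ℝ. -/

import Mathlib

private lemma clamp_sq_le (a b : ℝ) :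
    (min (max a 0) 1 - min (max b 0) 1)^2 ≤ (a - b)^2 := by
  have h1 : |min (max a 0) 1 - min (max b 0) 1| ≤ |max a 0 - max b 0| := by
    have := abs_min_sub_min_le_max (max a 0) 1 (max b 0) 1
    simpa using this
  have h2 : |max a 0 - max b 0| ≤ |a - b| := abs_max_sub_max_le_abs a b 0
  calc (min (max a 0) 1 - min (max b 0) 1)^2
      = |min (max a 0) 1 - min (max b 0) 1|^2 := (sq_abs _).symm
    _ ≤ |a - b|^2 := by
        have := h1.trans h2
        nlinarith [abs_nonneg (min (max a 0) 1 - min (max b 0) 1)]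
    _ = (a - b)^2 := sq_abs _

private lemma bilin_expand {V : Type*} [Fintype V] [DecidableEq V]
    (B : LinearMap.BilinForm ℝ (V → ℝ)) (u v : V → ℝ) :
    B u v = ∑ x : V, ∑ y : V, u x * v y *
      B (fun j => if x = j then 1 else 0) (fun j => if y = j then 1 else 0) := by
  conv_lhs => rw [pi_eq_sum_univ u, pi_eq_sum_univ v]
  simp only [map_sum, LinearMap.sum_apply, map_smul, LinearMap.smul_apply, smul_eq_mul]
  rw [Finset.sum_comm]
  refine Finset.sum_congr rfl fun x _ => ?_
  rw [Finset.mul_sum]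
  exact Finset.sum_congr rfl fun y _ => by ring

/-- Kigami's characterization of resistance forms on a finite set (Lemma 4.4 of
the paper): a quadratic form `u ↦ B u u` of a symmetric bilinear form `B` on
`ℝ^V` is nonnegative with kernel the constants and Markovian if and only if it
is the energy of a weighted graph on `V` whose positive-conductance edges
connect the whole of `V`. -/
theorem stmt7 {V : Type*} [Fintype V] (hV : 1 < Fintype.card V)
    (B : LinearMap.BilinForm ℝ (V → ℝ)) (hsymm : ∀ u v : V → ℝ, B u v = B v u) :
    ((∀ u : V → ℝ, 0 ≤ B u u) ∧
     (∀ u : V → ℝ, B u u = 0 ↔ ∃ a : ℝ, ∀ x, u x = a) ∧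
     (∀ u : V → ℝ,
        B (fun x => min (max (u x) 0) 1) (fun x => min (max (u x) 0) 1) ≤ B u u))
    ↔
    (∃ c : V → V → ℝ, (∀ x y, c x y = c y x) ∧ (∀ x y, 0 ≤ c x y) ∧
      (∀ x y : V, x ≠ y → ∃ m : ℕ, ∃ p : ℕ → V, p 0 = x ∧ p m = y ∧
        ∀ i < m, 0 < c (p i) (p (i+1))) ∧
      (∀ u : V → ℝ, B u u = (1/2) * ∑ x : V, ∑ y : V, c x y * (u x - u y)^2)) := by
  classical
  set e : V → (V → ℝ) := fun x j => if x = j then (1:ℝ) else 0 with he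
  constructor
  · rintro ⟨h1, h2, h3⟩
    -- the constant 1 is killed on either side
    have hB1 : ∀ v : V → ℝ, B v (fun _ => 1) = 0 := by
      intro v
      by_contra hne
      have h11 : B (fun _ => (1:ℝ)) (fun _ => (1:ℝ)) = 0 :=
        (h2 _).mpr ⟨1, fun _ => rfl⟩
      have hq : ∀ t : ℝ, B (v + t • fun _ => (1:ℝ)) (v + t • fun _ => (1:ℝ))
          = B v v + 2*t*B v (fun _ => 1) := by
        intro t
        simp only [map_add, LinearMap.add_apply, map_smul, LinearMap.smul_apply,
          smul_eq_mul]
        rw [hsymm (fun _ => 1) v, h11]; ring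
      set t : ℝ := -(B v v + 1)/(2 * B v (fun _ => 1)) with ht
      have h0 := h1 (v + t • fun _ => (1:ℝ))
      rw [hq t] at h0
      have : 2*t*B v (fun _ => 1) = -(B v v + 1) := by
        rw [ht]; field_simp
      linarith
    -- off-diagonal entries are nonpositive
    have hoff : ∀ x y : V, x ≠ y → B (e x) (e y) ≤ 0 := by
      intro x y hxy
      have key : ∀ ε : ℝ, 0 < ε →
          2*ε*B (e x) (e y) ≤ ε^2 * B (e y) (e y) := by
        intro ε hε
        have hclamp : (fun j => min (max ((e x - ε • e y) j) 0) 1) = e x := by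
          funext j
          by_cases hjx : x = j
          · subst hjx
            simp only [he, Pi.sub_apply, Pi.smul_apply, smul_eq_mul, if_pos rfl,
              if_neg (Ne.symm hxy)]
            norm_num
          · by_cases hjy : y = j
            · subst hjy
              have hv : (e x - ε • e y) y = -ε := by
                simp [he, hjx]
              rw [hv, max_eq_right (neg_nonpos.mpr hε.le)]
              simp [he, hjx]
            · simp only [he, Pi.sub_apply, Pi.smul_apply, smul_eq_mul,
                if_neg hjx, if_neg hjy]
              norm_num
        have hm := h3 (e x - ε • e y)
        rw [hclamp] at hm
        have hexp : B (e x - ε • e y) (e x - ε • e y)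
            = B (e x) (e x) - 2*ε*B (e x) (e y) + ε^2 * B (e y) (e y) := by
          simp only [map_sub, LinearMap.sub_apply, map_smul, LinearMap.smul_apply,
            smul_eq_mul]
          rw [hsymm (e y) (e x)]; ring
        rw [hexp] at hm
        linarith
      by_contra hpos
      push_neg at hpos
      have hyy := h1 (e y)
      set β := B (e x) (e y)
      set d := B (e y) (e y)
      have hεpos : 0 < β / (d + 1) := by positivity
      have hk := key (β / (d + 1)) hεpos
      have hd1 : (0:ℝ) < d + 1 := by linarith
      rw [div_pow] at hk
      have hk' : 2 * (β / (d + 1)) * β * (d+1)^2 ≤ β ^ 2 / (d + 1) ^ 2 * d * (d+1)^2 :=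
        mul_le_mul_of_nonneg_right hk (by positivity)
      have e1 : 2 * (β / (d + 1)) * β * (d+1)^2 = 2 * β^2 * (d+1) := by
        field_simp
      have e2 : β ^ 2 / (d + 1) ^ 2 * d * (d+1)^2 = β^2 * d := by
        field_simp
      rw [e1, e2] at hk'
      nlinarith [sq_nonneg β, mul_pos hpos hpos]
    -- the conductances
    set c : V → V → ℝ := fun x y => if x = y then 0 else -(B (e x) (e y)) with hc
    have hcs : ∀ x y, c x y = c y x := by
      intro x y
      by_cases h : x = y
      · simp [hc, h]
      · simp only [hc, if_neg h, if_neg (Ne.symm h)]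
        rw [hsymm]
    have hc0 : ∀ x y, 0 ≤ c x y := by
      intro x y
      by_cases h : x = y
      · simp [hc, h]
      · simp only [hc, if_neg h]
        linarith [hoff x y h]
    have hsumE : ∑ y : V, e y = (fun _ => (1:ℝ)) := by
      funext j
      rw [Finset.sum_apply]
      simp [he]
    have rowsum : ∀ x, ∑ y, c x y = B (e x) (e x) := by
      intro x
      have split : ∀ y, c x y = -(B (e x) (e y)) +
          (if x = y then B (e x) (e x) else 0) := by
        intro y
        by_cases h : x = y
        · simp [hc, h]
        · simp [hc, h]
      rw [Finset.sum_congr rfl fun y _ => split y, Finset.sum_add_distrib]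
      have hz : ∑ y : V, B (e x) (e y) = 0 := by
        rw [← map_sum, hsumE, hB1]
      rw [Finset.sum_neg_distrib, hz]
      simp
    -- the energy formula
    have energy : ∀ u : V → ℝ,
        B u u = (1/2) * ∑ x : V, ∑ y : V, c x y * (u x - u y)^2 := by
      intro u
      have hA : ∑ x : V, ∑ y : V, c x y * u x^2
          = ∑ x : V, B (e x) (e x) * u x^2 := by
        refine Finset.sum_congr rfl fun x _ => ?_
        rw [← Finset.sum_mul, rowsum]
      have hA' : ∑ x : V, ∑ y : V, c x y * u y^2
          = ∑ x : V, B (e x) (e x) * u x^2 := by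
        rw [Finset.sum_comm]
        refine Finset.sum_congr rfl fun y _ => ?_
        rw [← Finset.sum_mul]
        congr 1
        rw [Finset.sum_congr rfl fun x _ => hcs x y, rowsum]
      have hM : ∑ x : V, ∑ y : V, c x y * (u x * u y)
          = ∑ x : V, B (e x) (e x) * u x^2 - B u u := by
        have split : ∀ x y : V, c x y * (u x * u y)
            = (if x = y then B (e x) (e x) * u x^2 else 0)
              - u x * u y * B (e x) (e y) := by
          intro x y
          by_cases h : x = y
          · subst h; simp [hc]; ring
          · simp [hc, h]; ring
        rw [Finset.sum_congr rfl fun x _ =>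
          Finset.sum_congr rfl fun y _ => split x y]
        rw [Finset.sum_congr rfl fun x _ => Finset.sum_sub_distrib _ _,
          Finset.sum_sub_distrib]
        rw [← bilin_expand B u u]
        congr 1
        refine Finset.sum_congr rfl fun x _ => ?_
        simp
      have expand : ∑ x : V, ∑ y : V, c x y * (u x - u y)^2
          = (∑ x : V, ∑ y : V, c x y * u x^2)
            + (∑ x : V, ∑ y : V, c x y * u y^2)
            - 2 * (∑ x : V, ∑ y : V, c x y * (u x * u y)) := by
        have step : ∀ x : V, ∑ y : V, c x y * (u x - u y)^2
            = (∑ y : V, c x y * u x^2) + (∑ y : V, c x y * u y^2)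
              - 2 * ∑ y : V, c x y * (u x * u y) := by
          intro x
          rw [Finset.mul_sum, ← Finset.sum_add_distrib, ← Finset.sum_sub_distrib]
          exact Finset.sum_congr rfl fun y _ => by ring
        rw [Finset.sum_congr rfl fun x _ => step x, Finset.mul_sum,
          ← Finset.sum_add_distrib, ← Finset.sum_sub_distrib]
      rw [expand, hA, hA', hM]
      ring
    -- connectivity
    have conn : ∀ x y : V, x ≠ y → ∃ m : ℕ, ∃ p : ℕ → V, p 0 = x ∧ p m = y ∧
        ∀ i < m, 0 < c (p i) (p (i+1)) := by
      intro x y _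
      set R : V → Prop := fun z => ∃ m : ℕ, ∃ p : ℕ → V, p 0 = x ∧ p m = z ∧
        ∀ i < m, 0 < c (p i) (p (i+1)) with hR
      suffices hRy : R y by exact hRy
      have hRx : R x := ⟨0, fun _ => x, rfl, rfl, fun i hi => absurd hi (Nat.not_lt_zero i)⟩
      have hstep : ∀ a b : V, 0 < c a b → R a → R b := by
        rintro a b hcab ⟨m, p, hp0, hpm, hp⟩
        refine ⟨m+1, fun i => if i ≤ m then p i else b, by simp [hp0], by simp, ?_⟩
        intro i hi
        rcases Nat.lt_or_ge i m with h | h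
        · simp only [if_pos h.le, if_pos (Nat.succ_le_of_lt h)]
          exact hp i h
        · have him : i = m := by omega
          subst him
          simp only [if_pos (le_refl i), if_neg (by omega : ¬ i + 1 ≤ i), hpm]
          exact hcab
      set u : V → ℝ := fun z => if R z then 1 else 0 with hu
      have hBu : B u u = 0 := by
        rw [energy u]
        have hterm : ∀ a b : V, c a b * (u a - u b)^2 = 0 := by
          intro a b
          rcases eq_or_lt_of_le (hc0 a b) with h | h
          · rw [← h]; ring
          · have hab : R a ↔ R b :=
              ⟨hstep a b h, hstep b a (by rwa [← hcs a b])⟩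
            have : u a = u b := by simp only [hu]; rw [if_congr hab rfl rfl]
            rw [this]; ring
        rw [Finset.sum_congr rfl fun a _ =>
          Finset.sum_congr rfl fun b _ => hterm a b]
        simp
      obtain ⟨a, ha⟩ := (h2 u).mp hBu
      have hux : u x = 1 := by simp [hu, hRx]
      have huy : u y = 1 := by rw [ha y, ← ha x, hux]
      by_contra hRyn
      rw [hu] at huy
      simp only [if_neg hRyn] at huy
      norm_num at huy
    exact ⟨c, hcs, hc0, conn, energy⟩
  · rintro ⟨c, hcs, hc0, hconn, hE⟩
    have term_nonneg : ∀ (u : V → ℝ) (a b : V), 0 ≤ c a b * (u a - u b)^2 :=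
      fun u a b => mul_nonneg (hc0 a b) (sq_nonneg _)
    refine ⟨?_, ?_, ?_⟩
    · intro u
      rw [hE]
      apply mul_nonneg (by norm_num)
      exact Finset.sum_nonneg fun a _ =>
        Finset.sum_nonneg fun b _ => term_nonneg u a b
    · intro u
      constructor
      · intro h0
        rw [hE] at h0
        have hsum : ∑ x : V, ∑ y : V, c x y * (u x - u y)^2 = 0 := by linarith
        have hterm : ∀ a b : V, c a b * (u a - u b)^2 = 0 := by
          intro a b
          have h' := (Finset.sum_eq_zero_iff_of_nonneg
            (fun i _ => Finset.sum_nonneg fun j _ => term_nonneg u i j)).mp hsum a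
            (Finset.mem_univ a)
          exact (Finset.sum_eq_zero_iff_of_nonneg
            (fun j _ => term_nonneg u a j)).mp h' b (Finset.mem_univ b)
        have hedge : ∀ a b : V, 0 < c a b → u a = u b := by
          intro a b hcab
          have h' := hterm a b
          rcases mul_eq_zero.mp h' with h | h
          · exact absurd h hcab.ne'
          · have := sq_eq_zero_iff.mp h
            linarith
        have hchain : ∀ (m : ℕ) (p : ℕ → V),
            (∀ i < m, 0 < c (p i) (p (i+1))) → u (p 0) = u (p m) := by
          intro m
          induction m with
          | zero => intro p _; rfl
          | succ n ih =>
            intro p hp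
            rw [ih p (fun i hi => hp i (Nat.lt_succ_of_lt hi))]
            exact hedge _ _ (hp n (Nat.lt_succ_self n))
        obtain ⟨x0⟩ : Nonempty V := Fintype.card_pos_iff.mp (by omega)
        refine ⟨u x0, fun y => ?_⟩
        by_cases h : y = x0
        · rw [h]
        · obtain ⟨m, p, hp0, hpm, hp⟩ := hconn y x0 h
          have := hchain m p hp
          rw [hp0, hpm] at this
          exact this
      · rintro ⟨a, ha⟩
        rw [hE]
        simp [ha]
    · intro u
      rw [hE, hE]
      apply mul_le_mul_of_nonneg_left ?_ (by norm_num)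
      refine Finset.sum_le_sum fun x _ => Finset.sum_le_sum fun y _ => ?_
      exact mul_le_mul_of_nonneg_left (clamp_sq_le (u x) (u y)) (hc0 x y)
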